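/- Define g : ℝ → ℝ by g(t) = exp(−t^{−β}) for t > 0 and g(t) = 0 for t ≤ 0, where β > 0. Then there exists a constant θ > 0 depending only on β such that for all k ∈ ℕ and all t ∈ ℝ, |g^{(k)}(t)| ≤ k! · (2k/(e·β·θ^β))^{k/β}. -/

import Mathlib

noncomputable def gfun (β : ℝ) (t : ℝ) : ℝ :=
  if 0 < t then Real.exp (-(t ^ (-β))) else 0

lemma cauchy_bound {f : ℂ → ℂ} {c : ℂ} {R C : ℝ} (hR : 0 < R)
    (hf : DifferentiableOn ℂ f (Metric.closedBall c R))
    (hC : ∀ z ∈ Metric.sphere c R, ‖f z‖ ≤ C) (n : ℕ) :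
    ‖iteratedDeriv n f c‖ ≤ n.factorial * C / R ^ n := by
  lift R to NNReal using hR.le with R' hR'
  have hR0 : 0 < R' := by exact_mod_cast hR
  have h := hf.hasFPowerSeriesOnBall hR0
  have h1 : iteratedDeriv n f c = n.factorial • (cauchyPowerSeries f c R' n fun _ => (1:ℂ)) := by
    rw [iteratedDeriv_eq_iteratedFDeriv, ← h.factorial_smul 1 n]
  have hCnn : 0 ≤ C := by
    refine le_trans (norm_nonneg (f (c + R'))) (hC _ ?_)
    simp only [Metric.mem_sphere]
    rw [dist_eq_norm]
    simp [_root_.abs_of_nonneg hR.le]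
  have h2 : ‖cauchyPowerSeries f c R' n fun _ => (1:ℂ)‖ ≤ C * ((R':ℝ)⁻¹) ^ n := by
    have h3 := (cauchyPowerSeries f c R' n).le_opNorm fun _ => (1:ℂ)
    simp only [norm_one, Finset.prod_const_one, mul_one] at h3
    refine h3.trans ?_
    have h4 := norm_cauchyPowerSeries_le f c R' n
    refine h4.trans ?_
    have hint : IntervalIntegrable (fun θ => ‖f (circleMap c R' θ)‖) MeasureTheory.volume 0 (2*Real.pi) := by
      refine Continuous.intervalIntegrable ?_ _ _
      refine Continuous.norm ?_
      refine ContinuousOn.comp_continuous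
        (hf.continuousOn.mono Metric.sphere_subset_closedBall) (continuous_circleMap c R')
        (fun θ => circleMap_mem_sphere c R'.coe_nonneg θ)
    have h5 : (∫ θ : ℝ in (0)..2 * Real.pi, ‖f (circleMap c R' θ)‖) ≤ C * (2 * Real.pi) := by
      calc (∫ θ : ℝ in (0)..2 * Real.pi, ‖f (circleMap c R' θ)‖)
          ≤ ∫ _ : ℝ in (0)..2 * Real.pi, C := by
            refine intervalIntegral.integral_mono_on Real.two_pi_pos.le hint
              intervalIntegrable_const (fun θ _ => hC _ (circleMap_mem_sphere c R'.coe_nonneg θ))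
        _ = C * (2 * Real.pi) := by simp [mul_comm]
    have h6 : |(R':ℝ)| = (R':ℝ) := abs_of_nonneg R'.coe_nonneg
    rw [h6]
    have : (2 * Real.pi)⁻¹ * ∫ θ : ℝ in (0)..2 * Real.pi, ‖f (circleMap c R' θ)‖
        ≤ (2 * Real.pi)⁻¹ * (C * (2 * Real.pi)) := by
      exact mul_le_mul_of_nonneg_left h5 (by positivity)
    calc ((2 * Real.pi)⁻¹ * ∫ θ : ℝ in (0)..2 * Real.pi, ‖f (circleMap c R' θ)‖) * ((R':ℝ))⁻¹ ^ n
        ≤ ((2 * Real.pi)⁻¹ * (C * (2 * Real.pi))) * ((R':ℝ))⁻¹ ^ n :=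
          mul_le_mul_of_nonneg_right this (by positivity)
      _ = C * ((R':ℝ)⁻¹) ^ n := by
          field_simp
  calc ‖iteratedDeriv n f c‖ = n.factorial * ‖cauchyPowerSeries f c R' n fun _ => (1:ℂ)‖ := by
        rw [h1, nsmul_eq_mul, norm_mul]; simp
    _ ≤ n.factorial * (C * ((R':ℝ)⁻¹) ^ n) := by
        exact mul_le_mul_of_nonneg_left h2 (by positivity)
    _ = n.factorial * C / (R':ℝ) ^ n := by rw [inv_pow]; ring

open Complex Metric Real

lemma re_pos_of_mem {β : ℝ} (hβ : 0 < β) {t : ℝ} (ht : 0 < t) {z : ℂ}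
    (hz : z ∈ Metric.closedBall (t:ℂ) (min (1/2) (1/(8*β)) * t)) : t/2 ≤ z.re := by
  set th := min (1/2) (1/(8*β)) with hth
  have hth1 : th ≤ 1/2 := min_le_left _ _
  have hd : ‖z - (t:ℂ)‖ ≤ th * t := by
    simpa [Metric.mem_closedBall, Complex.dist_eq] using hz
  have h1 : |(z - (t:ℂ)).re| ≤ th * t := (Complex.abs_re_le_norm _).trans hd
  have h2 : (z - (t:ℂ)).re = z.re - t := by simp
  rw [h2, abs_le] at h1
  nlinarith [h1.1]

set_option maxHeartbeats 1000000 in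
lemma re_cpow_lower {β : ℝ} (hβ : 0 < β) {t : ℝ} (ht : 0 < t) {z : ℂ}
    (hz : z ∈ Metric.closedBall (t:ℂ) (min (1/2) (1/(8*β)) * t)) :
    1/2 * t ^ (-β) ≤ (z ^ (-β : ℂ)).re := by
  set th := min (1/2) (1/(8*β)) with hth
  have hth1 : th ≤ 1/2 := min_le_left _ _
  have hth2 : th * β ≤ 1/8 := by
    have : th ≤ 1/(8*β) := min_le_right _ _
    calc th * β ≤ (1/(8*β)) * β := by nlinarith
      _ = 1/8 := by field_simp
  have hthpos : 0 < th := lt_min (by norm_num) (by positivity)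
  have hd : ‖z - (t:ℂ)‖ ≤ th * t := by
    simpa [Metric.mem_closedBall, Complex.dist_eq] using hz
  have hre : t/2 ≤ z.re := re_pos_of_mem hβ ht hz
  have hrepos : 0 < z.re := lt_of_lt_of_le (by positivity) hre
  have hzne : z ≠ 0 := by
    intro h; rw [h] at hrepos; simp at hrepos
  have habs_pos : 0 < ‖z‖ := by
    have := Complex.abs_re_le_norm z
    calc (0:ℝ) < z.re := hrepos
      _ ≤ |z.re| := le_abs_self _
      _ ≤ ‖z‖ := Complex.abs_re_le_norm z
  have habs_u : ‖z‖ ≤ (1 + th) * t := by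
    calc ‖z‖ = ‖(t:ℂ) + (z - t)‖ := by ring_nf
      _ ≤ ‖(t:ℂ)‖ + ‖z - t‖ := norm_add_le _ _
      _ ≤ t + th * t := by
          refine add_le_add ?_ hd
          simp [Complex.norm_real, _root_.abs_of_nonneg ht.le]
      _ = (1 + th) * t := by ring
  have habs_l : t/2 ≤ ‖z‖ := by
    calc t/2 ≤ z.re := hre
      _ ≤ |z.re| := le_abs_self _
      _ ≤ ‖z‖ := Complex.abs_re_le_norm z
  have him : |z.im| ≤ th * t := by
    have : |(z - (t:ℂ)).im| ≤ th * t := (Complex.abs_im_le_norm _).trans hd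
    simpa using this
  -- arg bound
  set a := Complex.arg z with ha
  have ha2 : |a| < Real.pi/2 := Complex.abs_arg_lt_pi_div_two_iff.2 (Or.inl hrepos)
  have hsinabs : Real.sin |a| ≤ |z.im| / ‖z‖ := by
    have h1 : Real.sin a = z.im / ‖z‖ := Complex.sin_arg z
    have h2 : |Real.sin a| = |z.im| / ‖z‖ := by
      rw [h1, abs_div, _root_.abs_of_nonneg habs_pos.le]
    rw [← h2]
    rcases le_or_gt 0 a with h | h
    · rw [_root_.abs_of_nonneg h]; exact le_abs_self _
    · rw [_root_.abs_of_neg h, Real.sin_neg]; exact neg_le_abs _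
  have harg : |a| ≤ 4 * th := by
    have h1 : 2/Real.pi * |a| ≤ Real.sin |a| := Real.mul_le_sin (abs_nonneg a) ha2.le
    have h2 : |z.im| / ‖z‖ ≤ 2 * th := by
      rw [div_le_iff₀ habs_pos]
      calc |z.im| ≤ th * t := him
        _ ≤ 2 * th * (t/2) := by ring_nf; rfl
        _ ≤ 2 * th * ‖z‖ := by nlinarith
    have h3 : 2/Real.pi * |a| ≤ 2 * th := le_trans h1 (le_trans hsinabs h2)
    have hpi : Real.pi ≤ 4 := by linarith [Real.pi_le_four]
    have hpip := Real.pi_pos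
    rw [div_mul_eq_mul_div, div_le_iff₀ hpip] at h3
    nlinarith [abs_nonneg a, hthpos.le]
  have hba : |β * a| ≤ 1/2 := by
    rw [abs_mul, _root_.abs_of_nonneg hβ.le]
    calc β * |a| ≤ β * (4 * th) := by nlinarith [abs_nonneg a]
      _ ≤ 1/2 := by nlinarith
  have hcos : 7/8 ≤ Real.cos (β * a) := by
    have h1 := Real.one_sub_sq_div_two_le_cos (x := β * a)
    have h2 : (β * a)^2 ≤ (1/2)^2 := by
      have := _root_.sq_abs (β * a)
      nlinarith [abs_nonneg (β * a)]
    nlinarith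
  -- compute the real part
  have hre_eq : (z ^ (-β : ℂ)).re = Real.exp (Real.log (‖z‖) * (-β)) * Real.cos (β * a) := by
    rw [Complex.cpow_def_of_ne_zero hzne, Complex.exp_re]
    congr 1
    · congr 1
      simp [Complex.log_re, Complex.mul_re]
    · have : (Complex.log z * (-β : ℂ)).im = a * (-β) := by
        simp [Complex.mul_im, Complex.log_im, ha]
      rw [this]
      rw [show a * (-β) = -(β * a) by ring, Real.cos_neg]
  have habs_rpow : (7/8) * t ^ (-β) ≤ Real.exp (Real.log (‖z‖) * (-β)) := by
    have h0 : Real.exp (Real.log (‖z‖) * (-β)) = (‖z‖) ^ (-β) := by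
      rw [Real.rpow_def_of_pos habs_pos]
    rw [h0]
    have h1 : (‖z‖) ^ β ≤ ((1+th) * t) ^ β :=
      Real.rpow_le_rpow habs_pos.le habs_u hβ.le
    have h2 : ((1+th) * t) ^ β = (1+th)^β * t^β := Real.mul_rpow (by positivity) ht.le
    have h3 : (1+th)^β ≤ Real.exp (th * β) := by
      rw [Real.rpow_def_of_pos (by positivity)]
      refine Real.exp_le_exp.2 ?_
      have := Real.log_le_sub_one_of_pos (x := 1 + th) (by positivity)
      nlinarith
    have h4 : Real.exp (th * β) ≤ 8/7 := by
      have h5 : (7:ℝ)/8 ≤ Real.exp (-(1/8)) := by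
        have := Real.add_one_le_exp (-(1/8) : ℝ)
        linarith
      have h6 : Real.exp (th * β) ≤ Real.exp (1/8) := Real.exp_le_exp.2 hth2
      have h7 : Real.exp (1/8) = (Real.exp (-(1/8)))⁻¹ := by
        rw [← Real.exp_neg]; norm_num
      rw [h7] at h6
      refine h6.trans ?_
      rw [inv_le_comm₀ (Real.exp_pos _) (by norm_num)]
      linarith
    have htb : (0:ℝ) < t ^ β := Real.rpow_pos_of_pos ht β
    have hzb : (0:ℝ) < (‖z‖) ^ β := Real.rpow_pos_of_pos habs_pos β
    have h8 : (‖z‖) ^ β ≤ (8/7) * t ^ β := by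
      calc (‖z‖) ^ β ≤ (1+th)^β * t^β := by rw [← h2]; exact h1
        _ ≤ (8/7) * t^β := mul_le_mul_of_nonneg_right ((h3.trans h4).trans (by norm_num)) htb.le
    rw [Real.rpow_neg habs_pos.le, Real.rpow_neg ht.le]
    have h9 : ((8:ℝ)/7 * t^β)⁻¹ ≤ ((‖z‖)^β)⁻¹ :=
      inv_anti₀ hzb h8
    calc 7/8 * (t^β)⁻¹ = ((8:ℝ)/7 * t^β)⁻¹ := by rw [mul_inv]; norm_num
      _ ≤ ((‖z‖)^β)⁻¹ := h9
  rw [hre_eq]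
  have hexp_pos : 0 < Real.exp (Real.log (‖z‖) * (-β)) := Real.exp_pos _
  have htmb : (0:ℝ) < t ^ (-β) := Real.rpow_pos_of_pos ht _
  nlinarith [hcos, habs_rpow]

noncomputable def Gcf (β : ℝ) : ℂ → ℂ := fun z => Complex.exp (-(z ^ (-β : ℂ)))

lemma gc_real {β : ℝ} {t : ℝ} (ht : 0 < t) :
    Gcf β (t : ℂ) = ((Real.exp (-(t ^ (-β))) : ℝ) : ℂ) := by
  unfold Gcf
  have h1 : ((t:ℂ) ^ (-β : ℂ)) = (((t ^ (-β) : ℝ)) : ℂ) := by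
    rw [Complex.ofReal_cpow ht.le (-β), Complex.ofReal_neg]
  rw [h1, ← Complex.ofReal_neg, ← Complex.ofReal_exp]

lemma gc_diffOn {β : ℝ} : DifferentiableOn ℂ (Gcf β) Complex.slitPlane := by
  intro z hz
  refine DifferentiableAt.differentiableWithinAt ?_
  exact (((differentiableAt_id.cpow (differentiableAt_const _)) hz).neg).cexp

lemma gc_bound {β : ℝ} (hβ : 0 < β) (k : ℕ) {t : ℝ} (ht : 0 < t) :
    ‖iteratedDeriv k (Gcf β) (t : ℂ)‖ ≤
      k.factorial * Real.exp (-(1/2 * t ^ (-β))) / (min (1/2) (1/(8*β)) * t) ^ k := by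
  set th := min (1/2) (1/(8*β)) with hth
  have hthpos : (0:ℝ) < th := lt_min (by norm_num) (by positivity)
  have hR : 0 < th * t := by positivity
  refine cauchy_bound hR ?_ ?_ k
  · refine gc_diffOn.mono ?_
    intro z hz
    have := re_pos_of_mem hβ ht hz
    exact Complex.mem_slitPlane_iff.2 (Or.inl (lt_of_lt_of_le (by positivity) this))
  · intro z hz
    have hz' : z ∈ Metric.closedBall (t:ℂ) (th * t) := Metric.sphere_subset_closedBall hz
    have h1 : ‖Gcf β z‖ = Real.exp ((-(z ^ (-β : ℂ))).re) := by
      rw [Gcf]; rw [Complex.norm_exp]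
    rw [h1]
    refine Real.exp_le_exp.2 ?_
    have := re_cpow_lower hβ ht hz'
    simp only [Complex.neg_re]
    linarith

lemma opt_bound {β : ℝ} (hβ : 0 < β) {θ : ℝ} (hθ : 0 < θ) {t : ℝ} (ht : 0 < t)
    {k : ℕ} (hk : 1 ≤ k) :
    Real.exp (-(1/2 * t ^ (-β))) / (θ * t) ^ k ≤
      (2 * k / (Real.exp 1 * β * θ ^ β)) ^ ((k : ℝ) / β) := by
  set s := t ^ (-β) with hs_def
  have hs : 0 < s := Real.rpow_pos_of_pos ht _
  set a := (k : ℝ) / β with ha_def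
  have hkpos : (0:ℝ) < k := by exact_mod_cast hk
  have ha : 0 < a := div_pos hkpos hβ
  have key1 : s ^ a * Real.exp (-(1/2 * s)) ≤ (2 * a / Real.exp 1) ^ a := by
    have h2a : (0:ℝ) < 2 * a := by positivity
    have hlog : Real.log (s / (2 * a)) ≤ s / (2 * a) - 1 :=
      Real.log_le_sub_one_of_pos (by positivity)
    rw [Real.log_div hs.ne' h2a.ne'] at hlog
    have hid : a * (s / (2 * a)) = s / 2 := by field_simp
    have hmul : a * Real.log s - 1/2 * s ≤ a * (Real.log (2 * a) - 1) := by
      have h := mul_le_mul_of_nonneg_left hlog ha.le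
      nlinarith [h, hid]
    have e1 : s ^ a = Real.exp (Real.log s * a) := Real.rpow_def_of_pos hs a
    have e2 : (2 * a / Real.exp 1) ^ a = Real.exp (Real.log (2 * a / Real.exp 1) * a) :=
      Real.rpow_def_of_pos (by positivity) a
    have e3 : Real.log (2 * a / Real.exp 1) = Real.log (2 * a) - 1 := by
      rw [Real.log_div h2a.ne' (Real.exp_ne_zero 1), Real.log_exp]
    rw [e1, e2, e3, ← Real.exp_add]
    refine Real.exp_le_exp.2 ?_
    nlinarith [hmul]
  have htk : (0:ℝ) < t ^ k := by positivity
  have hsa' : s ^ a = (t ^ k)⁻¹ := by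
    have h1 : t ^ ((-β) * a) = s ^ a := Real.rpow_mul ht.le (-β) a
    have h2 : (-β) * a = -(k:ℝ) := by rw [ha_def]; field_simp
    rw [← h1, h2, Real.rpow_neg ht.le, Real.rpow_natCast]
  have hθa : (θ ^ β) ^ a = θ ^ k := by
    have h1 : θ ^ (β * a) = (θ ^ β) ^ a := Real.rpow_mul hθ.le β a
    have h2 : β * a = (k:ℝ) := by rw [ha_def]; field_simp
    rw [← h1, h2, Real.rpow_natCast]
  have hθk : (0:ℝ) < θ ^ k := by positivity
  calc Real.exp (-(1/2 * s)) / (θ * t) ^ k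
      = s ^ a * Real.exp (-(1/2 * s)) / θ ^ k := by
        rw [mul_pow, hsa']; field_simp
    _ ≤ (2 * a / Real.exp 1) ^ a / θ ^ k := by gcongr
    _ = (2 * a / Real.exp 1) ^ a / (θ ^ β) ^ a := by rw [hθa]
    _ = (2 * a / (Real.exp 1 * θ ^ β)) ^ a := by
        rw [← Real.div_rpow (by positivity) (Real.rpow_nonneg hθ.le β), div_div]
    _ = (2 * k / (Real.exp 1 * β * θ ^ β)) ^ ((k : ℝ) / β) := by
        congr 1
        rw [ha_def, div_eq_div_iff (by positivity) (by positivity)]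
        field_simp

lemma tendsto_aux {β : ℝ} (hβ : 0 < β) (c q : ℝ) :
    Filter.Tendsto (fun s : ℝ => c * ((s ^ (-β)) ^ q * Real.exp (-(1/2) * s ^ (-β))))
      (nhdsWithin 0 (Set.Ioi 0)) (nhds 0) := by
  have T1 : Filter.Tendsto (fun s : ℝ => s ^ (-β)) (nhdsWithin 0 (Set.Ioi 0)) Filter.atTop := by
    have h1 : Filter.Tendsto (fun s : ℝ => (s⁻¹) ^ β) (nhdsWithin 0 (Set.Ioi 0)) Filter.atTop :=
      (tendsto_rpow_atTop hβ).comp tendsto_inv_nhdsGT_zero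
    refine h1.congr' ?_
    filter_upwards [self_mem_nhdsWithin] with s hs
    rw [Real.inv_rpow (le_of_lt hs), ← Real.rpow_neg (le_of_lt hs)]
  have T2 : Filter.Tendsto (fun x : ℝ => c * (x ^ q * Real.exp (-(1/2) * x)))
      Filter.atTop (nhds 0) := by
    have h := tendsto_rpow_mul_exp_neg_mul_atTop_nhds_zero q (1/2) (by norm_num)
    simpa using h.const_mul c
  exact T2.comp T1

lemma gc_analytic {β : ℝ} : AnalyticOnNhd ℂ (Gcf β) Complex.slitPlane :=
  gc_diffOn.analyticOnNhd Complex.isOpen_slitPlane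

lemma corr {β : ℝ} (hβ : 0 < β) (k : ℕ) :
    (∀ t : ℝ, t ≤ 0 → iteratedDeriv k (gfun β) t = 0) ∧
    (∀ t : ℝ, 0 < t → iteratedDeriv k (gfun β) t = (iteratedDeriv k (Gcf β) (t:ℂ)).re) := by
  induction k with
  | zero =>
    refine ⟨fun t ht => ?_, fun t ht => ?_⟩
    · simp only [iteratedDeriv_zero, gfun, if_neg (not_lt.2 ht)]
    · simp only [iteratedDeriv_zero]
      rw [gc_real ht, Complex.ofReal_re, gfun, if_pos ht]
  | succ k IH =>
    obtain ⟨IH1, IH2⟩ := IH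
    set th := min (1/2 : ℝ) (1/(8*β)) with hth
    have hthpos : (0:ℝ) < th := lt_min (by norm_num) (by positivity)
    have hb : ∀ s : ℝ, 0 < s → |iteratedDeriv k (gfun β) s| ≤
        (k.factorial : ℝ) * Real.exp (-(1/2 * s ^ (-β))) / (th * s) ^ k := by
      intro s hs
      rw [IH2 s hs]
      calc |(iteratedDeriv k (Gcf β) (s:ℂ)).re| ≤ ‖iteratedDeriv k (Gcf β) (s:ℂ)‖ :=
            Complex.abs_re_le_norm _
        _ = ‖iteratedDeriv k (Gcf β) (s:ℂ)‖ := rfl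
        _ ≤ _ := gc_bound hβ k hs
    constructor
    · intro t ht
      rcases ht.lt_or_eq with ht' | ht'
      · rw [iteratedDeriv_succ]
        have hev : iteratedDeriv k (gfun β) =ᶠ[nhds t] (fun _ => (0:ℝ)) := by
          filter_upwards [IsOpen.mem_nhds isOpen_Iio ht'] with s hs
          exact IH1 s (le_of_lt hs)
        rw [hev.deriv_eq, deriv_const]
      · subst ht'
        rw [iteratedDeriv_succ]
        have hda : HasDerivAt (iteratedDeriv k (gfun β)) 0 0 := by
          rw [hasDerivAt_iff_tendsto_slope]
          rw [← nhdsLT_sup_nhdsGT, Filter.tendsto_sup]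
          constructor
          · refine Filter.Tendsto.congr' ?_ tendsto_const_nhds
            filter_upwards [self_mem_nhdsWithin] with s hs
            simp [slope_def_field, IH1 s (le_of_lt hs), IH1 0 le_rfl]
          · refine squeeze_zero_norm' ?_
              (tendsto_aux hβ ((k.factorial : ℝ)/th^k) (((k:ℝ)+1)/β))
            filter_upwards [self_mem_nhdsWithin] with s hs
            have hs' : (0:ℝ) < s := hs
            have h0 : iteratedDeriv k (gfun β) 0 = 0 := IH1 0 le_rfl
            have hslope : slope (iteratedDeriv k (gfun β)) 0 s
                = iteratedDeriv k (gfun β) s / s := by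
              rw [slope_def_field, h0]
              simp
            rw [hslope]
            have h1 : ‖iteratedDeriv k (gfun β) s / s‖ = |iteratedDeriv k (gfun β) s| / s := by
              rw [Real.norm_eq_abs, abs_div, _root_.abs_of_pos hs']
            rw [h1]
            have h2 : |iteratedDeriv k (gfun β) s| / s ≤
                ((k.factorial : ℝ) * Real.exp (-(1/2 * s ^ (-β))) / (th * s) ^ k) / s := by
              gcongr
              exact hb s hs'
            refine le_trans h2 (le_of_eq ?_)
            have hq : (s ^ (-β)) ^ (((k:ℝ)+1)/β) = (s ^ (k+1))⁻¹ := by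
              have h1 : s ^ ((-β) * (((k:ℝ)+1)/β)) = (s ^ (-β)) ^ (((k:ℝ)+1)/β) :=
                Real.rpow_mul hs'.le _ _
              have h2' : (-β) * (((k:ℝ)+1)/β) = -((k:ℝ)+1) := by field_simp
              rw [← h1, h2', Real.rpow_neg hs'.le,
                show ((k:ℝ)+1) = ((k+1 : ℕ) : ℝ) by push_cast; ring, Real.rpow_natCast]
            rw [hq, show (-(1/2) * s ^ (-β)) = -(1/2 * s ^ (-β)) by ring, mul_pow]
            have hsk : (0:ℝ) < s ^ k := by positivity
            field_simp
            ring
        rw [hda.deriv]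
    · intro t ht
      rw [iteratedDeriv_succ]
      have hev : iteratedDeriv k (gfun β) =ᶠ[nhds t]
          (fun s : ℝ => (iteratedDeriv k (Gcf β) (s:ℂ)).re) := by
        filter_upwards [IsOpen.mem_nhds isOpen_Ioi ht] with s hs
        exact IH2 s hs
      rw [hev.deriv_eq]
      have hmem : (t:ℂ) ∈ Complex.slitPlane :=
        Complex.mem_slitPlane_iff.2 (Or.inl (by simpa using ht))
      have hdiff : DifferentiableAt ℂ (iteratedDeriv k (Gcf β)) (t:ℂ) := by
        have h1 := ((gc_analytic (β := β)).iterated_deriv k) (t:ℂ) hmem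
        rw [← iteratedDeriv_eq_iterate] at h1
        exact h1.differentiableAt
      have hda : HasDerivAt (iteratedDeriv k (Gcf β)) (iteratedDeriv (k+1) (Gcf β) (t:ℂ)) (t:ℂ) := by
        rw [iteratedDeriv_succ]
        exact hdiff.hasDerivAt
      exact hda.real_of_complex.deriv

/-- John's estimate: there is `θ > 0` depending only on `β` such that
`|g^{(k)}(t)| ≤ k! · (2k/(e·β·θ^β))^{k/β}` for all `k ≥ 1` and all `t ∈ ℝ`. -/
theorem gfun_derivative_bound (β : ℝ) (hβ : 0 < β) :
    ∃ θ : ℝ, 0 < θ ∧ ∀ k : ℕ, 1 ≤ k → ∀ t : ℝ,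
      |iteratedDeriv k (gfun β) t| ≤
        (Nat.factorial k : ℝ) *
          (2 * k / (Real.exp 1 * β * θ ^ β)) ^ ((k : ℝ) / β) := by
  set th := min (1/2 : ℝ) (1/(8*β)) with hth
  have hthpos : (0:ℝ) < th := lt_min (by norm_num) (by positivity)
  refine ⟨th, hthpos, ?_⟩
  intro k hk t
  have hkpos : (0:ℝ) < k := by exact_mod_cast hk
  have hRHS : 0 ≤ (k.factorial : ℝ) * (2 * k / (Real.exp 1 * β * th ^ β)) ^ ((k : ℝ) / β) := by
    have hbase : 0 ≤ 2 * (k:ℝ) / (Real.exp 1 * β * th ^ β) := by positivity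
    positivity
  rcases le_or_gt t 0 with ht | ht
  · rw [(corr hβ k).1 t ht, abs_zero]; exact hRHS
  · rw [(corr hβ k).2 t ht]
    calc |(iteratedDeriv k (Gcf β) (t:ℂ)).re|
        ≤ ‖iteratedDeriv k (Gcf β) (t:ℂ)‖ := Complex.abs_re_le_norm _
      _ = ‖iteratedDeriv k (Gcf β) (t:ℂ)‖ := rfl
      _ ≤ (k.factorial : ℝ) * Real.exp (-(1/2 * t ^ (-β))) / (th * t) ^ k := gc_bound hβ k ht
      _ = (k.factorial : ℝ) * (Real.exp (-(1/2 * t ^ (-β))) / (th * t) ^ k) := by ring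
      _ ≤ (k.factorial : ℝ) * (2 * k / (Real.exp 1 * β * th ^ β)) ^ ((k : ℝ) / β) := by
          refine mul_le_mul_of_nonneg_left ?_ (by positivity)
          exact opt_bound hβ hthpos ht hk
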